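/- Let 𝒜 be a symmetric real tensor of even order m and dimension n. Then the function x ↦ 𝒜x^m attains a minimum value μ on the set {x ∈ ℝ^n : ‖x‖_m = 1}; this value μ is an H-eigenvalue of 𝒜, and every H-eigenvalue λ of 𝒜 satisfies λ ≥ μ. Consequently λ_min(𝒜) = min_{x ≠ 0} 𝒜x^m/‖x‖_m^m = min_{‖x‖_m = 1} 𝒜x^m, where λ_min(𝒜) denotes the minimum H-eigenvalue of 𝒜. -/

import Mathlib

open MvPolynomial Finset

noncomputable section

/-- `tmul A x = 𝒜 x^m`, the homogeneous form associated with an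
`m`-th order `n`-dimensional tensor `A`. -/
def tmul {m n : ℕ} (A : (Fin m → Fin n) → ℝ) (x : Fin n → ℝ) : ℝ :=
  ∑ g : Fin m → Fin n, A g * ∏ j, x (g j)

/-- A tensor is symmetric if its entries are invariant under permutations of the indices. -/
def IsSymT {m n : ℕ} (A : (Fin m → Fin n) → ℝ) : Prop :=
  ∀ (σ : Equiv.Perm (Fin m)) (g : Fin m → Fin n), A (g ∘ σ) = A g

/-- `lam` is an H-eigenvalue of a tensor of order `m + 1`:
there is a nonzero `x` with `𝒜 x^m = lam * x^{[m]}`. -/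
def IsHEig {m n : ℕ} (A : (Fin (m + 1) → Fin n) → ℝ) (lam : ℝ) : Prop :=
  ∃ x : Fin n → ℝ, x ≠ 0 ∧ ∀ i : Fin n,
    (∑ g : Fin m → Fin n, A (Fin.cons i g) * ∏ j, x (g j)) = lam * x i ^ m

/-- `𝒜_Γ x_Γ^m` for a subtensor `B` indexed by an index set `Γ ⊆ {1,…,n}`. -/
def subTmul {m n : ℕ} (Γ : Finset (Fin n)) (B : (Fin m → Γ) → ℝ) (x : Fin n → ℝ) : ℝ :=
  ∑ g : Fin m → Γ, B g * ∏ j, x (g j).1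

/-- An index tuple is off-diagonal if not all of its entries coincide. -/
def NotDiag {m : ℕ} {I : Type*} (g : Fin m → I) : Prop := ¬ ∀ j j' : Fin m, g j = g j'

/-- Condition (iii) in the definition of a W-tensor, for one subtensor. -/
def WCondIII {m n : ℕ} {Γ : Finset (Fin n)} (B : (Fin m → Γ) → ℝ) : Prop :=
  (∃ gb : Fin m → Γ, NotDiag gb ∧ ∀ g : Fin m → Γ, NotDiag g →
      (∀ σ : Equiv.Perm (Fin m), g ≠ gb ∘ σ) → B g = 0) ∨
  (∀ g : Fin m → Γ, NotDiag g → 0 ≤ B g)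

/-- Condition (i) in the definition of a W-tensor. -/
def WCondI {n s : ℕ} (Γ : Fin s → Finset (Fin n)) : Prop :=
  ∀ p : Fin s, 0 < (p : ℕ) →
    (((Finset.univ.filter fun l => l < p).biUnion Γ) ∩ Γ p).card ≤ 1

/-- W-tensor. -/
def IsWTensor {m n : ℕ} (A : (Fin m → Fin n) → ℝ) : Prop :=
  ∃ (s : ℕ) (Γ : Fin s → Finset (Fin n)) (B : ∀ l : Fin s, (Fin m → Γ l) → ℝ),
    0 < s ∧ s ≤ n ∧
    Function.Injective Γ ∧
    Finset.univ.biUnion Γ = Finset.univ ∧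
    WCondI Γ ∧
    (∀ x : Fin n → ℝ, tmul A x = ∑ l, subTmul (Γ l) (B l) x) ∧
    (∀ l, WCondIII (B l))

/-- Sums of squares of polynomials. -/
def IsSOSPoly {σ : Type*} (p : MvPolynomial σ ℝ) : Prop :=
  ∃ (r : ℕ) (q : Fin r → MvPolynomial σ ℝ), p = ∑ j, q j ^ 2

/-- The polynomial `𝒜 x^m` as a formal multivariate polynomial. -/
def tpoly {m n : ℕ} (A : (Fin m → Fin n) → ℝ) : MvPolynomial (Fin n) ℝ :=
  ∑ g : Fin m → Fin n, MvPolynomial.C (A g) * ∏ j, MvPolynomial.X (g j)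

/-- The polynomial `𝒜_Γ x_Γ^m` of a subtensor, in the variables `x_Γ`. -/
def subTpoly {m n : ℕ} (Γ : Finset (Fin n)) (B : (Fin m → Γ) → ℝ) : MvPolynomial Γ ℝ :=
  ∑ g : Fin m → Γ, MvPolynomial.C (B g) * ∏ j, MvPolynomial.X (g j)

/-- A (symmetric) tensor is copositive if `𝒜 x^m ≥ 0` for all entrywise-nonnegative `x`. -/
def Copositive {m n : ℕ} (A : (Fin m → Fin n) → ℝ) : Prop :=
  ∀ x : Fin n → ℝ, (∀ i, 0 ≤ x i) → 0 ≤ tmul A x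



section AuxLemma21

open Finset

lemma tmul_smul' {m n : ℕ} (A : (Fin m → Fin n) → ℝ) (t : ℝ) (x : Fin n → ℝ) :
    tmul A (t • x) = t ^ m * tmul A x := by
  unfold tmul
  rw [Finset.mul_sum]
  refine Finset.sum_congr rfl fun g _ => ?_
  simp only [Pi.smul_apply, smul_eq_mul, Finset.prod_mul_distrib, Finset.prod_const,
    Finset.card_univ, Fintype.card_fin]
  ring

lemma prod_erase_zero' {m : ℕ} (f : Fin (m + 1) → ℝ) :
    ∏ k ∈ univ.erase 0, f k = ∏ j : Fin m, f j.succ := by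
  have h : (univ : Finset (Fin (m + 1))).erase 0 = univ.image Fin.succ := by
    ext k
    simp [Fin.exists_succ_eq, eq_comm]
  rw [h, Finset.prod_image (fun a _ b _ h => Fin.succ_injective _ h)]

lemma sum_cons_eq' {m n : ℕ} (F : (Fin (m + 1) → Fin n) → ℝ) :
    ∑ g, F g = ∑ c : Fin n, ∑ h : Fin m → Fin n, F (Fin.cons c h) := by
  rw [← Equiv.sum_comp (Fin.consEquiv fun _ => Fin n) F, Fintype.sum_prod_type]
  rfl

lemma tmul_eq_sum_cons' {m n : ℕ} (A : (Fin (m + 1) → Fin n) → ℝ) (x : Fin n → ℝ) :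
    tmul A x = ∑ i, x i * ∑ h : Fin m → Fin n, A (Fin.cons i h) * ∏ j, x (h j) := by
  unfold tmul
  rw [sum_cons_eq' (fun g => A g * ∏ j, x (g j))]
  refine Finset.sum_congr rfl fun c _ => ?_
  rw [Finset.mul_sum]
  refine Finset.sum_congr rfl fun h _ => ?_
  rw [Fin.prod_univ_succ]
  simp only [Fin.cons_zero, Fin.cons_succ]
  ring

lemma swap_term' {m n : ℕ} (A : (Fin (m + 1) → Fin n) → ℝ) (hsym : IsSymT A)
    (x e : Fin n → ℝ) (j : Fin (m + 1)) :
    ∑ g : Fin (m + 1) → Fin n, A g * (e (g j) * ∏ j' ∈ univ.erase j, x (g j'))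
      = ∑ g : Fin (m + 1) → Fin n, A g * (e (g 0) * ∏ j' ∈ univ.erase 0, x (g j')) := by
  set σ : Equiv.Perm (Fin (m + 1)) := Equiv.swap 0 j with hσ
  set E : ((Fin (m + 1) → Fin n)) ≃ ((Fin (m + 1) → Fin n)) :=
    Equiv.arrowCongr σ (Equiv.refl (Fin n)) with hE
  rw [← Equiv.sum_comp E (fun g => A g * (e (g j) * ∏ j' ∈ univ.erase j, x (g j')))]
  refine Finset.sum_congr rfl fun g _ => ?_
  have hEg : E g = g ∘ σ := by
    ext k
    simp [hE, Equiv.arrowCongr, hσ, Equiv.symm_swap]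
  rw [hEg, hsym σ g]
  congr 1
  have h1 : (g ∘ σ) j = g 0 := by simp [hσ, Equiv.swap_apply_right]
  rw [h1]
  congr 1
  have h2 : ∏ j' ∈ univ.erase j, x ((g ∘ σ) j') = ∏ k ∈ (univ.erase j).image σ, x (g k) := by
    rw [Finset.prod_image (fun a _ b _ h => σ.injective h)]
    rfl
  rw [h2]
  congr 1
  rw [Finset.image_erase σ.injective, Finset.image_univ_equiv]
  simp [hσ, Equiv.swap_apply_right]

lemma collapse' {m n : ℕ} (A : (Fin (m + 1) → Fin n) → ℝ) (x : Fin n → ℝ) (i : Fin n) :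
    ∑ g : Fin (m + 1) → Fin n,
        A g * ((Pi.single i 1 : Fin n → ℝ) (g 0) * ∏ j' ∈ univ.erase 0, x (g j'))
      = ∑ h : Fin m → Fin n, A (Fin.cons i h) * ∏ j, x (h j) := by
  rw [sum_cons_eq' (fun g : Fin (m + 1) → Fin n =>
    A g * ((Pi.single i 1 : Fin n → ℝ) (g 0) * ∏ j' ∈ univ.erase 0, x (g j')))]
  have key : ∀ c : Fin n, ∀ h : Fin m → Fin n,
      A (Fin.cons c h) * ((Pi.single i 1 : Fin n → ℝ) ((Fin.cons c h : Fin (m+1) → Fin n) 0)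
        * ∏ j' ∈ univ.erase 0, x ((Fin.cons c h : Fin (m+1) → Fin n) j'))
      = if c = i then A (Fin.cons c h) * ∏ j, x (h j) else 0 := by
    intro c h
    rw [prod_erase_zero' (fun k => x ((Fin.cons c h : Fin (m+1) → Fin n) k))]
    simp only [Fin.cons_zero, Fin.cons_succ, Pi.single_apply]
    by_cases hc : c = i <;> simp [hc]
  simp only [key]
  rw [Finset.sum_comm]
  simp

lemma hasDerivAt_tmul_line' {m n : ℕ} (A : (Fin (m + 1) → Fin n) → ℝ) (hsym : IsSymT A)
    (x : Fin n → ℝ) (i : Fin n) :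
    HasDerivAt (fun t : ℝ => tmul A (x + t • (Pi.single i 1 : Fin n → ℝ)))
      ((m + 1) * ∑ h : Fin m → Fin n, A (Fin.cons i h) * ∏ j, x (h j)) 0 := by
  set e : Fin n → ℝ := Pi.single i 1 with he
  have hfun : (fun t : ℝ => tmul A (x + t • e))
      = fun t : ℝ => ∑ g : Fin (m + 1) → Fin n, A g * ∏ j, (x (g j) + t * e (g j)) := by
    funext t
    unfold tmul
    simp [Pi.add_apply, Pi.smul_apply, smul_eq_mul]
  rw [hfun]
  have hder : ∀ g : Fin (m + 1) → Fin n,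
      HasDerivAt (fun t : ℝ => A g * ∏ j, (x (g j) + t * e (g j)))
        (A g * ∑ j, (∏ j' ∈ univ.erase j, (x (g j') + 0 * e (g j'))) • e (g j)) 0 := by
    intro g
    refine HasDerivAt.const_mul _ ?_
    exact HasDerivAt.fun_finsetProd fun j _ => by
      simpa using ((hasDerivAt_id (0:ℝ)).mul_const (e (g j))).const_add (x (g j))
  have := HasDerivAt.fun_sum (fun g (_ : g ∈ (univ : Finset (Fin (m+1) → Fin n))) => hder g)
  refine this.congr_deriv (Eq.symm ?_)
  simp only [zero_mul, add_zero, smul_eq_mul]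
  have step1 : ∀ g : Fin (m + 1) → Fin n,
      A g * ∑ j, (∏ j' ∈ univ.erase j, x (g j')) * e (g j)
        = ∑ j, A g * (e (g j) * ∏ j' ∈ univ.erase j, x (g j')) := by
    intro g
    rw [Finset.mul_sum]
    exact Finset.sum_congr rfl fun j _ => by ring
  calc ((m:ℝ) + 1) * ∑ h : Fin m → Fin n, A (Fin.cons i h) * ∏ j, x (h j)
      = ∑ _j : Fin (m + 1), ∑ g : Fin (m + 1) → Fin n,
          A g * (e (g 0) * ∏ j' ∈ univ.erase 0, x (g j')) := by
        rw [Finset.sum_const, card_univ, Fintype.card_fin, nsmul_eq_mul,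
          collapse' A x i]
        push_cast
        ring
    _ = ∑ j : Fin (m + 1), ∑ g : Fin (m + 1) → Fin n,
          A g * (e (g j) * ∏ j' ∈ univ.erase j, x (g j')) := by
        exact Finset.sum_congr rfl fun j _ => (swap_term' A hsym x e j).symm
    _ = ∑ g : Fin (m + 1) → Fin n, A g * ∑ j, (∏ j' ∈ univ.erase j, x (g j')) * e (g j) := by
        rw [Finset.sum_comm]
        exact Finset.sum_congr rfl fun g _ => (step1 g).symm

end AuxLemma21

/-- Lemma 2.1 (minimum part): for an even-order symmetric tensor, `𝒜x^m`
attains a minimum `μ` on the unit `m`-sphere `{x : ‖x‖_m = 1}`; this value is the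
minimum H-eigenvalue, and `λ_min = min_{x ≠ 0} 𝒜x^m / ‖x‖_m^m`. -/
theorem lemma21_min (m n : ℕ) (hn : 0 < n) (heven : Even (m + 1))
    (A : (Fin (m + 1) → Fin n) → ℝ) (hsym : IsSymT A) :
    ∃ μ : ℝ,
      (∃ x : Fin n → ℝ, (∑ i, x i ^ (m + 1)) = 1 ∧ tmul A x = μ) ∧
      (∀ x : Fin n → ℝ, (∑ i, x i ^ (m + 1)) = 1 → μ ≤ tmul A x) ∧
      IsHEig A μ ∧
      (∀ lam : ℝ, IsHEig A lam → μ ≤ lam) ∧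
      (∀ x : Fin n → ℝ, x ≠ 0 → μ ≤ tmul A x / ∑ i, |x i| ^ (m + 1)) := by
  classical
  have hm1 : ((m : ℝ) + 1) ≠ 0 := by positivity
  -- the constraint set
  set S : Set (Fin n → ℝ) := {x | ∑ i, x i ^ (m + 1) = 1} with hSdef
  have hgcont : Continuous fun x : Fin n → ℝ => ∑ i, x i ^ (m + 1) := by fun_prop
  have hfcont : Continuous (tmul A) := by
    unfold tmul
    fun_prop
  have hclosed : IsClosed S := isClosed_eq hgcont continuous_const
  have hbdd : Bornology.IsBounded S := by
    refine (Metric.isBounded_closedBall (x := (0 : Fin n → ℝ)) (r := 1)).subset ?_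
    intro x hx
    rw [Metric.mem_closedBall, dist_zero_right]
    rw [pi_norm_le_iff_of_nonneg zero_le_one]
    intro i
    rw [Real.norm_eq_abs]
    have h1 : |x i| ^ (m + 1) ≤ 1 := by
      calc |x i| ^ (m + 1) = x i ^ (m + 1) := heven.pow_abs _
        _ ≤ ∑ k, x k ^ (m + 1) :=
            Finset.single_le_sum (f := fun k => x k ^ (m + 1))
              (fun k _ => heven.pow_nonneg _) (Finset.mem_univ i)
        _ = 1 := hx
    exact (pow_le_one_iff_of_nonneg (abs_nonneg _) (Nat.succ_ne_zero m)).mp h1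
  have hne : S.Nonempty := by
    refine ⟨(Pi.single ⟨0, hn⟩ 1 : Fin n → ℝ), ?_⟩
    show ∑ i, (Pi.single (⟨0, hn⟩ : Fin n) 1 : Fin n → ℝ) i ^ (m + 1) = 1
    simp [Pi.single_apply, apply_ite (fun y : ℝ => y ^ (m + 1)),
      zero_pow (Nat.succ_ne_zero m)]
  obtain ⟨x₀, hx₀S, hmin⟩ :=
    (Metric.isCompact_of_isClosed_isBounded hclosed hbdd).exists_isMinOn hne hfcont.continuousOn
  have hx₀1 : ∑ i, x₀ i ^ (m + 1) = 1 := hx₀S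
  set μ := tmul A x₀ with hμ
  -- key scaling inequality
  have key : ∀ y : Fin n → ℝ, 0 < ∑ k, y k ^ (m + 1) →
      μ * ∑ k, y k ^ (m + 1) ≤ tmul A y := by
    intro y hy
    set c := ∑ k, y k ^ (m + 1) with hc
    set t : ℝ := (c⁻¹) ^ ((m + 1 : ℝ)⁻¹) with ht
    have ht0 : 0 < t := Real.rpow_pos_of_pos (inv_pos.2 hy) _
    have htpow : t ^ (m + 1) = c⁻¹ := by
      rw [ht, ← Real.rpow_natCast ((c⁻¹) ^ ((m + 1 : ℝ)⁻¹)) (m + 1),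
        ← Real.rpow_mul (inv_nonneg.2 hy.le)]
      rw [show ((m + 1 : ℝ)⁻¹ * ((m + 1 : ℕ) : ℝ)) = 1 by push_cast; field_simp]
      exact Real.rpow_one _
    have hmem : (t • y) ∈ S := by
      show ∑ i, (t • y) i ^ (m + 1) = 1
      simp only [Pi.smul_apply, smul_eq_mul, mul_pow, ← Finset.mul_sum]
      rw [htpow, ← hc, inv_mul_cancel₀ hy.ne']
    have h1 : μ ≤ tmul A (t • y) := hmin hmem
    rw [tmul_smul', htpow] at h1
    have h2 : μ * c ≤ c⁻¹ * tmul A y * c := by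
      exact mul_le_mul_of_nonneg_right h1 hy.le
    calc μ * c ≤ c⁻¹ * tmul A y * c := h2
      _ = tmul A y := by field_simp
  -- positivity of the norm sum for nonzero vectors
  have hpos : ∀ y : Fin n → ℝ, y ≠ 0 → 0 < ∑ k, y k ^ (m + 1) := by
    intro y hy
    obtain ⟨k, hk⟩ := Function.ne_iff.mp hy
    exact Finset.sum_pos' (fun k _ => heven.pow_nonneg _)
      ⟨k, Finset.mem_univ k, heven.pow_pos hk⟩
  have hx₀ne : x₀ ≠ 0 := by
    intro h
    rw [h] at hx₀1
    simp [zero_pow (Nat.succ_ne_zero m)] at hx₀1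
  -- the eigen-equation at the minimizer
  have heig : ∀ i, (∑ g : Fin m → Fin n, A (Fin.cons i g) * ∏ j, x₀ (g j)) = μ * x₀ i ^ m := by
    intro i
    set e : Fin n → ℝ := Pi.single i 1 with he
    set φ : ℝ → ℝ := fun t => ∑ k, (x₀ + t • e) k ^ (m + 1) with hφ
    set F : ℝ → ℝ := fun t => tmul A (x₀ + t • e) - μ * φ t with hF
    have hφcont : Continuous φ := by
      unfold φ
      fun_prop
    have hφ0 : φ 0 = 1 := by simpa [hφ] using hx₀1
    have hloc : IsLocalMin F 0 := by
      have hev : ∀ᶠ t in nhds (0 : ℝ), 0 < φ t := by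
        have : Filter.Tendsto φ (nhds 0) (nhds (φ 0)) := hφcont.continuousAt
        rw [hφ0] at this
        exact this.eventually_const_lt one_pos
      have hF0 : F 0 = 0 := by simp [hF, hφ0, hμ]
      rw [IsLocalMin, IsMinFilter, hF0]
      filter_upwards [hev] with t ht
      have hk := key _ ht
      simp only [hF]
      linarith [hk]
    have hd1 := hasDerivAt_tmul_line' A hsym x₀ i
    have hd2 : HasDerivAt φ ((m + 1) * x₀ i ^ m) 0 := by
      have hder : ∀ k : Fin n,
          HasDerivAt (fun t : ℝ => (x₀ k + t * e k) ^ (m + 1))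
            (((m : ℝ) + 1) * x₀ k ^ m * e k) 0 := by
        intro k
        have hb : HasDerivAt (fun t : ℝ => x₀ k + t * e k) (e k) 0 := by
          simpa using ((hasDerivAt_id (0:ℝ)).mul_const (e k)).const_add (x₀ k)
        have := hb.pow (m + 1)
        simpa [Pi.pow_def] using this
      have hsum := HasDerivAt.fun_sum (fun k (_ : k ∈ (Finset.univ : Finset (Fin n))) => hder k)
      have hfun : φ = fun t : ℝ => ∑ k, (x₀ k + t * e k) ^ (m + 1) := by
        funext t
        simp [hφ]
      rw [hfun]
      refine hsum.congr_deriv (Eq.symm ?_)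
      rw [show (∑ k, ((m : ℝ) + 1) * x₀ k ^ m * e k)
          = ∑ k, (if k = i then ((m : ℝ) + 1) * x₀ k ^ m else 0) from
        Finset.sum_congr rfl fun k _ => by
          by_cases hk : k = i <;> simp [he, hk, Pi.single_apply]]
      rw [Finset.sum_ite_eq' Finset.univ i (fun k => ((m : ℝ) + 1) * x₀ k ^ m)]
      simp
    have hd : HasDerivAt F
        (((m + 1) * ∑ g : Fin m → Fin n, A (Fin.cons i g) * ∏ j, x₀ (g j))
          - μ * ((m + 1) * x₀ i ^ m)) 0 := hd1.sub (hd2.const_mul μ)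
    have hzero := hloc.deriv_eq_zero
    rw [hd.deriv] at hzero
    have : ((m : ℝ) + 1) * ((∑ g : Fin m → Fin n, A (Fin.cons i g) * ∏ j, x₀ (g j))
        - μ * x₀ i ^ m) = 0 := by ring_nf; ring_nf at hzero; linarith
    have := (mul_eq_zero.mp this).resolve_left hm1
    linarith
  refine ⟨μ, ⟨x₀, hx₀1, rfl⟩, fun x hx => hmin hx, ⟨x₀, hx₀ne, heig⟩, ?_, ?_⟩
  · rintro lam ⟨y, hy0, hyeig⟩
    have hc := hpos y hy0
    have htm : tmul A y = lam * ∑ k, y k ^ (m + 1) := by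
      rw [tmul_eq_sum_cons' A y, Finset.mul_sum]
      refine Finset.sum_congr rfl fun k _ => ?_
      rw [hyeig k]
      ring
    have hk := key y hc
    rw [htm] at hk
    exact le_of_mul_le_mul_right hk hc
  · intro y hy0
    have hc := hpos y hy0
    have habs : ∑ i, |y i| ^ (m + 1) = ∑ i, y i ^ (m + 1) :=
      Finset.sum_congr rfl fun i _ => heven.pow_abs _
    rw [habs, le_div_iff₀ hc]
    exact key y hc

end
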